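/- Let p ≥ 2 and let x ∈ F(p) be represented by a positive normal form x = x_{i₁}^{r₁}⋯x_{iₙ}^{rₙ} with n ≥ 1, set N₂(x) = max{ i_k + (p−1)(r_k + r_{k+1} + ⋯ + r_n) + 1 : k = 1,…,n }, and let f = ρ(x) be the corresponding piecewise-linear homeomorphism of ℝ. Then N₂(x) equals the y-coordinate of the last breakpoint of the graph of f; that is, if b = inf{ s ∈ ℝ : f is affine on [s,∞) }, then f(b) = N₂(x). -/

import Mathlib

open scoped BigOperators

/-- Relators of Thompson's group `F(p)`: `x_i⁻¹ x_j x_i x_{j+p-1}⁻¹` for `i < j`. -/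
def thompsonRels (p : ℕ) : Set (FreeGroup ℕ) :=
  { rel | ∃ i j : ℕ, i < j ∧
      rel = (FreeGroup.of i)⁻¹ * FreeGroup.of j * FreeGroup.of i *
        (FreeGroup.of (j + p - 1))⁻¹ }

/-- Thompson's group `F(p)`, presented with generators `x_i` (`i : ℕ`) and relations
`x_i⁻¹ · x_j · x_i = x_{j+p-1}` for `i < j`. -/
def FP (p : ℕ) : Type := PresentedGroup (thompsonRels p)

instance (p : ℕ) : Group (FP p) :=
  inferInstanceAs (Group (PresentedGroup (thompsonRels p)))

/-- The generator `x_i` of `F(p)`. -/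
def xg (p : ℕ) (i : ℕ) : FP p := PresentedGroup.of (rels := thompsonRels p) i

/-- Word length of `x : G` with respect to a set `S` of generators: the least length of a
word in elements of `S ∪ S⁻¹` whose product is `x`. -/
noncomputable def wordLength {G : Type*} [Group G] (S : Set G) (x : G) : ℕ :=
  sInf { n : ℕ | ∃ w : List G, w.length = n ∧ (∀ g ∈ w, g ∈ S ∨ g⁻¹ ∈ S) ∧ w.prod = x }

/-- The word length `|x|_p` on `F(p)`, with respect to the generators `x_0, …, x_{p-1}`. -/
noncomputable def wlen (p : ℕ) (x : FP p) : ℕ :=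
  wordLength { g : FP p | ∃ i, i < p ∧ g = xg p i } x

/-- The data of a candidate normal form
`x_{i₁}^{r₁} ⋯ x_{iₙ}^{rₙ} · x_{jₘ}^{-sₘ} ⋯ x_{j₁}^{-s₁}` in `F(p)`. -/
structure NFData (p : ℕ) where
  n : ℕ
  m : ℕ
  i : Fin n → ℕ
  r : Fin n → ℕ
  j : Fin m → ℕ
  s : Fin m → ℕ

namespace NFData

variable {p : ℕ}

/-- The element of `F(p)` represented by the normal form data, namely
`x_{i₁}^{r₁} ⋯ x_{iₙ}^{rₙ} · (x_{j₁}^{s₁} ⋯ x_{jₘ}^{sₘ})⁻¹`. -/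
def elem (d : NFData p) : FP p :=
  (List.ofFn fun k => xg p (d.i k) ^ d.r k).prod *
    ((List.ofFn fun l => xg p (d.j l) ^ d.s l).prod)⁻¹

/-- The generator with index `a` occurs in `d` (with positive or negative exponent). -/
def Occurs (d : NFData p) (a : ℕ) : Prop :=
  (∃ k, d.i k = a) ∨ (∃ l, d.j l = a)

/-- `d` is a normal form of `x ∈ F(p)`: the indices are strictly increasing, the exponents
are at least `1`, `iₙ ≠ jₘ` when both parts are nonempty, whenever a generator and its
inverse both occur one of the following `p-1` generators (or its inverse) occurs as well,
and the corresponding product equals `x`. -/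
def IsNormalFormOf (d : NFData p) (x : FP p) : Prop :=
  StrictMono d.i ∧ StrictMono d.j ∧
    (∀ k, 1 ≤ d.r k) ∧ (∀ l, 1 ≤ d.s l) ∧
    (∀ (hn : 0 < d.n) (hm : 0 < d.m),
      d.i ⟨d.n - 1, Nat.sub_lt hn Nat.one_pos⟩ ≠ d.j ⟨d.m - 1, Nat.sub_lt hm Nat.one_pos⟩) ∧
    (∀ a : ℕ, (∃ k, d.i k = a) → (∃ l, d.j l = a) →
      ∃ b : ℕ, a < b ∧ b ≤ a + p - 1 ∧ d.Occurs b) ∧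
    x = d.elem

/-- The quantity `D(x) = r₁ + ⋯ + rₙ + s₁ + ⋯ + sₘ + iₙ + jₘ` (the terms `iₙ`, `jₘ` being
omitted when `n = 0`, resp. `m = 0`). -/
def D (d : NFData p) : ℕ :=
  (∑ k, d.r k) + (∑ l, d.s l) +
    (if hn : 0 < d.n then d.i ⟨d.n - 1, Nat.sub_lt hn Nat.one_pos⟩ else 0) +
    (if hm : 0 < d.m then d.j ⟨d.m - 1, Nat.sub_lt hm Nat.one_pos⟩ else 0)

end NFData

/-- The tail sum `r_k + r_{k+1} + ⋯ + r_n`. -/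
def tailSum {n : ℕ} (r : Fin n → ℕ) (k : Fin n) : ℕ :=
  ∑ l ∈ Finset.univ.filter (fun l => k ≤ l), r l
/-- `N(x)` associated to a normal form in `F(2)` (Theorem 3):
the maximum of `i_k + r_k + ⋯ + r_n + 1` and `j_l + s_l + ⋯ + s_m + 1`. -/
def NFData.N2 (d : NFData 2) : ℕ :=
  max (Finset.univ.sup fun k => d.i k + tailSum d.r k + 1)
      (Finset.univ.sup fun l => d.j l + tailSum d.s l + 1)

/-- `N(x)` associated to a normal form in `F(p)` (Theorem 6):
the maximum of `⌊i_k/(p-1)⌋ + r_k + ⋯ + r_n + 1` and `⌊j_l/(p-1)⌋ + s_l + ⋯ + s_m + 1`. -/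
def NFData.Ngen {p : ℕ} (d : NFData p) : ℕ :=
  max (Finset.univ.sup fun k => d.i k / (p - 1) + tailSum d.r k + 1)
      (Finset.univ.sup fun l => d.j l / (p - 1) + tailSum d.s l + 1)

/-- `N(x) = max { i_k + r_k + ⋯ + r_n + 1 }` for a positive word (Proposition 2). -/
def posN {n : ℕ} (i r : Fin n → ℕ) : ℕ :=
  Finset.univ.sup fun k => i k + tailSum r k + 1

/-- `N₁(x) = max { ⌊i_k/(p-1)⌋ + r_k + ⋯ + r_n + 1 }` (Proposition 4). -/
def posN1 (p : ℕ) {n : ℕ} (i r : Fin n → ℕ) : ℕ :=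
  Finset.univ.sup fun k => i k / (p - 1) + tailSum r k + 1

/-- `N₂(x) = max { i_k + (p-1)(r_k + ⋯ + r_n) + 1 }` (Proposition 5). -/
def posN2 (p : ℕ) {n : ℕ} (i r : Fin n → ℕ) : ℕ :=
  Finset.univ.sup fun k => i k + (p - 1) * tailSum r k + 1

/-- `x ∈ ℤ[1/p]`. -/
def IsPAdicRational (p : ℕ) (x : ℝ) : Prop :=
  ∃ (a : ℤ) (n : ℕ), x = (a : ℝ) / (p : ℝ) ^ n

/-- Thompson's group `F(p)` realized as a set of permutations of `ℝ`: orientation-preserving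
piecewise-linear homeomorphisms of `[0,1]` (extended by the identity outside `[0,1]`) with
finitely many breakpoints, all in `ℤ[1/p]`, whose slopes are integer powers of `p`. -/
def PLSet (p : ℕ) : Set (Equiv.Perm ℝ) :=
  { f | Monotone f ∧ (∀ t : ℝ, t ≤ 0 → f t = t) ∧ (∀ t : ℝ, 1 ≤ t → f t = t) ∧
    ∃ B : Finset ℝ, (∀ b ∈ B, IsPAdicRational p b) ∧
      ∀ t : ℝ, t ∉ (B : Set ℝ) →
        ∃ ε > (0 : ℝ), ∃ (k : ℤ) (c : ℝ), ∀ s : ℝ, |s - t| < ε → f s = (p : ℝ) ^ k * s + c }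

/-- The map `Φ_p` on homeomorphisms: `(Φ_p f)(t) = t` for `t ≤ 1 - 1/p`, and
`(Φ_p f)(t) = ((p-1) + f(pt - (p-1)))/p` for `t ≥ 1 - 1/p`. -/
noncomputable def PhiMap (p : ℕ) (f : ℝ → ℝ) : ℝ → ℝ := fun t =>
  if t ≤ 1 - 1 / (p : ℝ) then t
  else (((p : ℝ) - 1) + f ((p : ℝ) * t - ((p : ℝ) - 1))) / (p : ℝ)

/-- The piecewise-linear homeomorphism `f_i` of `ℝ` corresponding to the generator `x_i`
of `F(p)`. -/
noncomputable def fgen (p : ℕ) (i : ℕ) : ℝ → ℝ := fun t =>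
  if t ≤ (i : ℝ) then t
  else if t ≤ (i : ℝ) + 1 then (p : ℝ) * t + (i : ℝ) * (1 - (p : ℝ))
  else t + (p : ℝ) - 1


section StatementAux

/-- Invariant: `f t = t + (p-1)S` for `t ≥ B`, and `f t < t + (p-1)S` for `t < B`. -/
def PLInv (p : ℕ) (f : ℝ → ℝ) (S : ℕ) (B : ℝ) : Prop :=
  (∀ t : ℝ, B ≤ t → f t = t + ((p : ℝ) - 1) * S) ∧
  (∀ t : ℝ, t < B → f t < t + ((p : ℝ) - 1) * S)

variable {p : ℕ}

lemma two_le_cast (hp : 2 ≤ p) : (2 : ℝ) ≤ (p : ℝ) := by exact_mod_cast hp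

lemma fgen_eq_of_ge (hp : 2 ≤ p) (j : ℕ) {t : ℝ} (ht : (j : ℝ) + 1 ≤ t) :
    fgen p j t = t + ((p : ℝ) - 1) := by
  have h2p := two_le_cast hp
  unfold fgen
  split_ifs with h1 h2
  · linarith
  · have h3 : t = (j : ℝ) + 1 := le_antisymm h2 ht
    rw [h3]; ring
  · ring

lemma fgen_lt_of_lt (hp : 2 ≤ p) (j : ℕ) {t : ℝ} (ht : t < (j : ℝ) + 1) :
    fgen p j t < t + ((p : ℝ) - 1) := by
  have h2p := two_le_cast hp
  unfold fgen
  split_ifs with h1 h2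
  · linarith
  · push_neg at h1
    nlinarith
  · linarith

lemma fgen_le (hp : 2 ≤ p) (j : ℕ) (t : ℝ) : fgen p j t ≤ t + ((p : ℝ) - 1) := by
  rcases le_or_gt ((j : ℝ) + 1) t with h | h
  · exact le_of_eq (fgen_eq_of_ge hp j h)
  · exact le_of_lt (fgen_lt_of_lt hp j h)

lemma plinv_congr {f g : ℝ → ℝ} {S B} (h : ∀ t, f t = g t) (hf : PLInv p f S B) :
    PLInv p g S B :=
  ⟨fun t ht => (h t) ▸ hf.1 t ht, fun t ht => (h t) ▸ hf.2 t ht⟩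

lemma plinv_step (hp : 2 ≤ p) {f : ℝ → ℝ} {S : ℕ} {B : ℝ} (h : PLInv p f S B) (j : ℕ) :
    PLInv p (fun t => fgen p j (f t)) (S + 1) (max B ((j : ℝ) + 1 - ((p : ℝ) - 1) * S)) := by
  constructor
  · intro t ht
    show fgen p j (f t) = t + ((p : ℝ) - 1) * ((S + 1 : ℕ) : ℝ)
    have h1 : B ≤ t := le_trans (le_max_left _ _) ht
    have h2 : (j : ℝ) + 1 - ((p : ℝ) - 1) * S ≤ t := le_trans (le_max_right _ _) ht
    have hft := h.1 t h1
    have : (j : ℝ) + 1 ≤ f t := by rw [hft]; linarith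
    rw [fgen_eq_of_ge hp j this, hft]
    push_cast; ring
  · intro t ht
    show fgen p j (f t) < t + ((p : ℝ) - 1) * ((S + 1 : ℕ) : ℝ)
    rcases lt_or_ge t B with h1 | h1
    · have h2 := h.2 t h1
      have h3 := fgen_le hp j (f t)
      push_cast; linarith
    · have hft := h.1 t h1
      have h2 : t < (j : ℝ) + 1 - ((p : ℝ) - 1) * S := by
        rcases lt_max_iff.mp ht with h' | h'
        · exact absurd h' (not_lt.mpr h1)
        · exact h'
      have h3 : f t < (j : ℝ) + 1 := by rw [hft]; linarith
      have h4 := fgen_lt_of_lt hp j h3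
      push_cast; linarith

lemma plinv_block (hp : 2 ≤ p) {f : ℝ → ℝ} {S : ℕ} {B : ℝ} (h : PLInv p f S B) (j : ℕ) :
    ∀ m : ℕ, PLInv p (fun t => (fgen p j)^[m + 1] (f t)) (S + (m + 1))
      (max B ((j : ℝ) + 1 - ((p : ℝ) - 1) * S)) := by
  intro m
  induction m with
  | zero =>
    have := plinv_step hp h j
    exact plinv_congr (fun t => by simp) this
  | succ m ih =>
    have h2 := plinv_step hp ih j
    have hmax : max (max B ((j : ℝ) + 1 - ((p : ℝ) - 1) * S))
        ((j : ℝ) + 1 - ((p : ℝ) - 1) * (S + (m + 1) : ℕ)) =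
        max B ((j : ℝ) + 1 - ((p : ℝ) - 1) * S) := by
      apply max_eq_left
      refine le_trans ?_ (le_max_right _ _)
      have h1 : (0 : ℝ) ≤ (p : ℝ) - 1 := by have := two_le_cast hp; linarith
      have h2 : (S : ℝ) ≤ ((S + (m + 1) : ℕ) : ℝ) := by push_cast; linarith
      nlinarith
    rw [hmax] at h2
    refine plinv_congr (fun t => ?_) h2
    rw [Function.iterate_succ_apply' (fgen p j) (m + 1) (f t)]

lemma plinv_gen_pow (hp : 2 ≤ p) (j : ℕ) :
    ∀ m : ℕ, PLInv p (fun t => (fgen p j)^[m + 1] t) (m + 1) ((j : ℝ) + 1) := by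
  intro m
  induction m with
  | zero =>
    constructor
    · intro t ht
      show (fgen p j)^[0 + 1] t = t + ((p : ℝ) - 1) * ((0 + 1 : ℕ) : ℝ)
      rw [zero_add, Function.iterate_one, fgen_eq_of_ge hp j ht]
      push_cast; ring
    · intro t ht
      show (fgen p j)^[0 + 1] t < t + ((p : ℝ) - 1) * ((0 + 1 : ℕ) : ℝ)
      rw [zero_add, Function.iterate_one]
      have := fgen_lt_of_lt hp j ht
      push_cast; linarith
  | succ m ih =>
    have h2 := plinv_step hp ih j
    have hmax : max ((j : ℝ) + 1) ((j : ℝ) + 1 - ((p : ℝ) - 1) * ((m + 1 : ℕ) : ℝ)) =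
        (j : ℝ) + 1 := by
      apply max_eq_left
      have h1 : (0 : ℝ) ≤ (p : ℝ) - 1 := by have := two_le_cast hp; linarith
      have h2 : (0 : ℝ) ≤ ((m + 1 : ℕ) : ℝ) := by positivity
      nlinarith
    rw [hmax] at h2
    refine plinv_congr (fun t => ?_) h2
    rw [Function.iterate_succ_apply' (fgen p j) (m + 1) t]

lemma foldl_replicate_fgen (j m : ℕ) (t : ℝ) :
    (List.replicate m j).foldl (fun s j' => fgen p j' s) t = (fgen p j)^[m] t := by
  induction m generalizing t with
  | zero => simp
  | succ m ih => simp [List.replicate_succ, ih, Function.iterate_succ_apply]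

lemma sup_univ_castSucc_nat {n : ℕ} (f : Fin (n + 1) → ℕ) :
    Finset.univ.sup f = max (Finset.univ.sup fun k : Fin n => f k.castSucc)
      (f (Fin.last n)) := by
  apply le_antisymm
  · refine Finset.sup_le fun k _ => ?_
    induction k using Fin.lastCases with
    | last => exact le_max_right _ _
    | cast k =>
      exact le_trans (Finset.le_sup (f := fun k : Fin n => f k.castSucc)
        (Finset.mem_univ k)) (le_max_left _ _)
  · apply max_le
    · exact Finset.sup_le fun k _ => Finset.le_sup (Finset.mem_univ k.castSucc)
    · exact Finset.le_sup (Finset.mem_univ (Fin.last n))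

lemma sup_add_nat {α : Type*} (s : Finset α) (hs : s.Nonempty) (f : α → ℕ) (c : ℕ) :
    s.sup (fun a => f a + c) = s.sup f + c := by
  apply le_antisymm
  · exact Finset.sup_le fun a ha => Nat.add_le_add_right (Finset.le_sup ha) c
  · obtain ⟨a, ha, hfa⟩ := Finset.exists_mem_eq_sup s hs f
    rw [hfa]
    exact Finset.le_sup (f := fun a => f a + c) ha

lemma tailSum_castSucc {n : ℕ} (r : Fin (n + 1) → ℕ) (k : Fin n) :
    tailSum r k.castSucc = tailSum (fun l : Fin n => r l.castSucc) k + r (Fin.last n) := by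
  unfold tailSum
  rw [Finset.sum_filter, Finset.sum_filter, Fin.sum_univ_castSucc]
  simp [Fin.castSucc_le_castSucc_iff, Fin.le_last]

lemma tailSum_last {n : ℕ} (r : Fin (n + 1) → ℕ) :
    tailSum r (Fin.last n) = r (Fin.last n) := by
  unfold tailSum
  rw [Finset.sum_filter]
  simp [Fin.last_le_iff]

lemma posN2_succ (hp : 2 ≤ p) {n : ℕ} (hn : 1 ≤ n) (i r : Fin (n + 1) → ℕ) :
    posN2 p i r = max (posN2 p (fun k : Fin n => i k.castSucc)
        (fun k : Fin n => r k.castSucc) + (p - 1) * r (Fin.last n))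
      (i (Fin.last n) + (p - 1) * r (Fin.last n) + 1) := by
  unfold posN2
  rw [sup_univ_castSucc_nat]
  congr 1
  · have hne : (Finset.univ : Finset (Fin n)).Nonempty :=
      ⟨⟨0, hn⟩, Finset.mem_univ _⟩
    rw [← sup_add_nat _ hne _ ((p - 1) * r (Fin.last n))]
    apply Finset.sup_congr rfl
    intro k _
    rw [tailSum_castSucc]
    ring
  · rw [tailSum_last]

lemma rho_prod_foldl {p : ℕ} (ρ : FP p → ℝ → ℝ)
    (hρmul : ∀ a b : FP p, ρ (a * b) = ρ b ∘ ρ a) :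
    ∀ l : List (FP p), l ≠ [] → ∀ t : ℝ,
      ρ l.prod t = l.foldl (fun t g => ρ g t) t := by
  intro l
  induction l with
  | nil => intro h; exact absurd rfl h
  | cons a l ih =>
    intro _ t
    cases l with
    | nil => simp
    | cons b l' =>
      rw [List.prod_cons, hρmul]
      simp only [Function.comp_apply, List.foldl_cons]
      exact ih (by simp) (ρ a t)

/-- Main induction: invariant and value identity for a positive word. -/
lemma posword_inv (hp : 2 ≤ p) :
    ∀ n : ℕ, 1 ≤ n → ∀ i r : Fin n → ℕ, (∀ k, 1 ≤ r k) →
      ∃ B : ℝ,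
        PLInv p (fun t => ((List.ofFn fun k => List.replicate (r k) (i k)).flatten).foldl
          (fun s j => fgen p j s) t) (∑ k, r k) B ∧
        B + ((p : ℝ) - 1) * (∑ k, r k) = (posN2 p i r : ℝ) := by
  intro n hn
  induction n, hn using Nat.le_induction with
  | base =>
    intro i r hr
    refine ⟨(i 0 : ℝ) + 1, ?_, ?_⟩
    · obtain ⟨m, hm⟩ : ∃ m, r 0 = m + 1 := ⟨r 0 - 1, by have := hr 0; omega⟩
      have h := plinv_gen_pow hp (i 0) m
      rw [← hm] at h
      have hsum : (∑ k : Fin 1, r k) = r 0 := by simp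
      rw [← hsum] at h
      refine plinv_congr (fun t => ?_) h
      rw [show (List.ofFn fun k : Fin 1 => List.replicate (r k) (i k)) =
        [List.replicate (r 0) (i 0)] by simp [List.ofFn_succ]]
      simp [foldl_replicate_fgen]
    · have hsum : (∑ k : Fin 1, r k) = r 0 := by simp
      have hN : posN2 p i r = i 0 + (p - 1) * r 0 + 1 := by
        unfold posN2
        have : tailSum r 0 = r 0 := by
          unfold tailSum
          rw [Finset.sum_filter]
          simp [Fin.le_def]
        simp [this]
      rw [hsum, hN]
      have hc : ((p - 1 : ℕ) : ℝ) = (p : ℝ) - 1 := by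
        rw [Nat.cast_sub (by omega)]; simp
      push_cast [hc]
      ring
  | succ n hn ih =>
    intro i r hr
    obtain ⟨B', hInv', hId'⟩ := ih (fun k => i k.castSucc) (fun k => r k.castSucc)
      (fun k => hr _)
    obtain ⟨m, hm⟩ : ∃ m, r (Fin.last n) = m + 1 := ⟨r (Fin.last n) - 1, by have := hr (Fin.last n); omega⟩
    set S' : ℕ := ∑ k : Fin n, r k.castSucc with hS'
    have hblock := plinv_block hp hInv' (i (Fin.last n)) m
    refine ⟨max B' ((i (Fin.last n) : ℝ) + 1 - ((p : ℝ) - 1) * S'), ?_, ?_⟩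
    · have hsum : (∑ k : Fin (n + 1), r k) = S' + (m + 1) := by
        rw [Fin.sum_univ_castSucc, hm]
      rw [hsum]
      refine plinv_congr (fun t => ?_) hblock
      rw [show (List.ofFn fun k : Fin (n + 1) => List.replicate (r k) (i k)) =
        (List.ofFn fun k : Fin n => List.replicate (r k.castSucc) (i k.castSucc)).concat
          (List.replicate (r (Fin.last n)) (i (Fin.last n))) from List.ofFn_succ' _]
      rw [List.concat_eq_append, List.flatten_append, List.foldl_append]
      simp only [List.flatten, List.append_eq, List.append_nil]
      rw [foldl_replicate_fgen, hm]
    · have hsum : (∑ k : Fin (n + 1), r k) = S' + (m + 1) := by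
        rw [Fin.sum_univ_castSucc, hm]
      rw [hsum, posN2_succ hp hn i r]
      have hc : ((p - 1 : ℕ) : ℝ) = (p : ℝ) - 1 := by
        rw [Nat.cast_sub (by omega)]; simp
      rw [Nat.cast_max]
      push_cast [hc]
      rw [← max_add_add_right]
      congr 1
      · rw [← hId', hm]; push_cast; ring
      · rw [hm]; push_cast; ring

end StatementAux

/-- Proposition 5, last breakpoint. If `x ∈ F(p)` has positive normal
form `x_{i₁}^{r₁} ⋯ x_{iₙ}^{rₙ}` and `f = ρ(x)` is the corresponding piecewise-linear
homeomorphism of `ℝ`, then `N₂(x) = max { i_k + (p-1)(r_k + ⋯ + r_n) + 1 }` is the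
`y`-coordinate of the last breakpoint of the graph of `f`: if
`b = inf { s | f is affine on [s,∞) }`, then `f(b) = N₂(x)`. -/
theorem statement11 (p : ℕ) (hp : 2 ≤ p) (n : ℕ) (hn : 1 ≤ n) (i r : Fin n → ℕ)
    (hi : StrictMono i) (hr : ∀ k, 1 ≤ r k) (x : FP p)
    (hx : x = (List.ofFn fun k => xg p (i k) ^ r k).prod)
    (ρ : FP p → ℝ → ℝ)
    (hρmul : ∀ a b : FP p, ρ (a * b) = ρ b ∘ ρ a)
    (hρgen : ∀ j : ℕ, ρ (xg p j) = fgen p j)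
    (f : ℝ → ℝ) (hf : f = ρ x)
    (b : ℝ) (hb : b = sInf { s : ℝ | ∃ a c : ℝ, ∀ t : ℝ, s ≤ t → f t = a * t + c }) :
    f b = (posN2 p i r : ℝ) := by
  have hfeq : ∀ t : ℝ, f t =
      ((List.ofFn fun k => List.replicate (r k) (i k)).flatten).foldl
        (fun s j => fgen p j s) t := by
    intro t
    have hL : (List.ofFn fun k => xg p (i k) ^ r k).prod =
        (((List.ofFn fun k => List.replicate (r k) (i k)).flatten).map
          (fun j => xg p j)).prod := by
      rw [List.map_flatten, List.prod_flatten, List.map_ofFn, List.map_ofFn]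
      simp [Function.comp_def, List.prod_replicate]
    have hWne : (List.ofFn fun k => List.replicate (r k) (i k)).flatten ≠ [] := by
      intro h
      rw [List.flatten_eq_nil_iff] at h
      have h0 := h (List.replicate (r ⟨0, hn⟩) (i ⟨0, hn⟩))
        (List.mem_ofFn.mpr ⟨⟨0, hn⟩, rfl⟩)
      have h1 := hr ⟨0, hn⟩
      rw [List.replicate_eq_nil_iff] at h0
      omega
    have hmapne : (((List.ofFn fun k => List.replicate (r k) (i k)).flatten).map
        (fun j => xg p j)) ≠ [] := by
      simpa using hWne
    rw [hf, hx, hL, rho_prod_foldl ρ hρmul _ hmapne t, List.foldl_map]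
    simp only [hρgen]
  obtain ⟨B, hInv, hId⟩ := posword_inv hp n hn i r hr
  have hfInv : PLInv p f (∑ k, r k) B := plinv_congr (fun t => (hfeq t).symm) hInv
  set D : ℝ := ((p : ℝ) - 1) * (∑ k, r k) with hD
  have hle : IsLeast { s : ℝ | ∃ a c : ℝ, ∀ t : ℝ, s ≤ t → f t = a * t + c } B := by
    constructor
    · exact ⟨1, D, fun t ht => by rw [hfInv.1 t ht]; ring⟩
    · rintro s ⟨a, c, h⟩
      by_contra hs
      push_neg at hs
      have h1 := h B (le_of_lt hs)
      have h2 := h (B + 1) (by linarith)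
      have h3 := h ((s + B) / 2) (by linarith)
      have e1 := hfInv.1 B le_rfl
      have e2 := hfInv.1 (B + 1) (by linarith)
      have e3 := hfInv.2 ((s + B) / 2) (by linarith)
      rw [h1] at e1
      rw [h2] at e2
      rw [h3] at e3
      have hab : a * (B + 1) = a * B + a := by ring
      have ha : a = 1 := by linarith
      have hc : c = D := by
        rw [ha] at e1; linarith
      rw [ha, hc] at e3
      linarith
  rw [hb, hle.csInf_eq, hfInv.1 B le_rfl, hId]
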